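/- Let δ: G → W be a W-groupoid on a group G with Borel subgroup B = δ⁻¹(1), such that δ_B: B\G/B → W is a bijection with inverse C. Then (G, B, C) satisfies the Bruhat decomposition axiom (B): for all w ∈ W and s ∈ S, (i) if ws < w then C(ws) ⊆ C(w)C(s) ⊆ C(ws) ∪ C(w), and (ii) if ws > w then C(w)C(s) = C(ws). -/
import Mathlib


open List Pointwise

variable {B : Type*} {W : Type*} [Group W] {M : CoxeterMatrix B}

/-- The Bruhat order on a Coxeter group, defined via the subword property. -/
def BruhatLE (cs : CoxeterSystem M W) (v w : W) : Prop :=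
  ∃ ω : List B, cs.IsReduced ω ∧ cs.wordProd ω = w ∧
    ∃ ω' : List B, ω'.Sublist ω ∧ cs.wordProd ω' = v

variable {G : Type*} [Group G]

/-- A `W`-groupoid structure on a group `G` (a `W`-groupoid with one chamber):
a weak function `δ : G → W` satisfying (WG1), (WG2), (WG3). -/
structure IsGroupWGroupoid (cs : CoxeterSystem M W) (δ : G → W) : Prop where
  weak : ∀ i : B, ∃ g : G, δ g = cs.simple i
  wg1 : δ 1 = 1
  wg2 : ∀ g h : G, BruhatLE cs (δ g * δ h) (δ (g * h))
  wg3 : ∀ (g : G) (i : B), cs.IsRightDescent (δ g) i →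
    ∃ h : G, δ (h⁻¹ * g) = cs.simple i ∧ δ h = δ g * cs.simple i

/-- The fiber `C(w) = δ⁻¹(w)`, which is the double coset `B w B` when
`δ_B : B\G/B → W` is a bijection. -/
def Cset (δ : G → W) (w : W) : Set G := {g : G | δ g = w}

/-- `δ_B : B\G/B → W` is a bijection: `δ` is surjective, and any two elements with
the same image lie in the same `(B,B)`-double coset, where `B = δ⁻¹(1)`. -/
def DeltaBBijective (δ : G → W) : Prop :=
  (∀ w : W, ∃ g : G, δ g = w) ∧
  (∀ g h : G, δ g = δ h → ∃ b ∈ Cset δ 1, ∃ b' ∈ Cset δ 1, h = b * g * b')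

/-! ### Auxiliary lemmas -/

theorem bruhatLE_length (cs : CoxeterSystem M W) {v w : W} (h : BruhatLE cs v w) :
    cs.length v ≤ cs.length w := by
  obtain ⟨ω, hred, hw, ω', hsub, hv⟩ := h
  calc cs.length v = cs.length (cs.wordProd ω') := by rw [hv]
    _ ≤ ω'.length := cs.length_wordProd_le ω'
    _ ≤ ω.length := hsub.length_le
    _ = cs.length w := by rw [← hw]; exact hred.symm

theorem bruhatLE_eq (cs : CoxeterSystem M W) {v w : W} (h : BruhatLE cs v w)
    (hl : cs.length w ≤ cs.length v) : v = w := by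
  obtain ⟨ω, hred, hw, ω', hsub, hv⟩ := h
  have h1 : cs.length v ≤ ω'.length := by rw [← hv]; exact cs.length_wordProd_le ω'
  have h2 : cs.length w = ω.length := by rw [← hw]; exact hred
  have h3 : ω.length ≤ ω'.length := by omega
  rw [← hv, ← hw, hsub.eq_of_length_le h3]

theorem bruhatLE_one (cs : CoxeterSystem M W) {v : W} (h : BruhatLE cs v 1) : v = 1 := by
  have := bruhatLE_length cs h
  rw [cs.length_one, Nat.le_zero, cs.length_eq_zero_iff] at this
  exact this

theorem bruhatLE_simple (cs : CoxeterSystem M W) {v : W} {i : B}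
    (h : BruhatLE cs v (cs.simple i)) : v = 1 ∨ v = cs.simple i := by
  have hlen := bruhatLE_length cs h
  rw [cs.length_simple] at hlen
  interval_cases hl : cs.length v
  · exact Or.inl (cs.length_eq_zero_iff.mp hl)
  · exact Or.inr (bruhatLE_eq cs h (by rw [cs.length_simple, hl]))

theorem not_descent_mul_simple (cs : CoxeterSystem M W) {v : W} {i : B}
    (hd : cs.IsRightDescent v i) : ¬ cs.IsRightDescent (v * cs.simple i) i := by
  unfold CoxeterSystem.IsRightDescent at *
  rw [cs.simple_mul_simple_cancel_right]
  omega

section WG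

variable {cs : CoxeterSystem M W} {δ : G → W} (hwg : IsGroupWGroupoid cs δ)
include hwg

theorem delta_inv_one {b : G} (hb : δ b = 1) : δ b⁻¹ = 1 := by
  have := hwg.wg2 b b⁻¹
  rw [hb, one_mul, mul_inv_cancel, hwg.wg1] at this
  exact bruhatLE_one cs this

theorem delta_inv_simple {h : G} {i : B} (hh : δ h = cs.simple i) : δ h⁻¹ = cs.simple i := by
  have hb := hwg.wg2 h h⁻¹
  rw [hh, mul_inv_cancel, hwg.wg1] at hb
  have := bruhatLE_one cs hb
  rw [← cs.simple_mul_simple_cancel_left (w := δ h⁻¹) i, this, mul_one]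

theorem delta_mul_right_one {b : G} (hb : δ b = 1) (g : G) : δ (g * b) = δ g := by
  have h1 := hwg.wg2 g b
  rw [hb, mul_one] at h1
  have h2 := hwg.wg2 (g * b) b⁻¹
  rw [delta_inv_one hwg hb, mul_one, mul_inv_cancel_right] at h2
  exact (bruhatLE_eq cs h1 (bruhatLE_length cs h2)).symm

/-- If `i` is not a right descent of `v`, then `C(v) C(s_i) ⊆ C(v s_i)` pointwise. -/
theorem delta_mul_ascent {g h : G} {v : W} {i : B} (hg : δ g = v) (hh : δ h = cs.simple i)
    (hnd : ¬ cs.IsRightDescent v i) : δ (g * h) = v * cs.simple i := by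
  have h1 := hwg.wg2 g h
  rw [hg, hh] at h1
  have h2 := hwg.wg2 (g * h) h⁻¹
  rw [delta_inv_simple hwg hh, mul_inv_cancel_right, hg] at h2
  -- lengths
  have hv : cs.length (v * cs.simple i) = cs.length v + 1 :=
    (cs.not_isRightDescent_iff).mp hnd
  have hu1 : cs.length v + 1 ≤ cs.length (δ (g * h)) := hv ▸ bruhatLE_length cs h1
  have hu2 : cs.length (δ (g * h) * cs.simple i) ≤ cs.length v := bruhatLE_length cs h2
  have hu3 := cs.length_mul_simple (δ (g * h)) i
  have : cs.length v ≤ cs.length (δ (g * h) * cs.simple i) := by omega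
  have heq : δ (g * h) * cs.simple i = v := bruhatLE_eq cs h2 this
  calc δ (g * h) = δ (g * h) * cs.simple i * cs.simple i :=
        (cs.simple_mul_simple_cancel_right i).symm
    _ = v * cs.simple i := by rw [heq]

/-- If `i` is a right descent of `v`, then `C(v) C(s_i) ⊆ C(v s_i) ∪ C(v)` pointwise. -/
theorem delta_mul_descent (hbij : DeltaBBijective δ) {g h : G} {v : W} {i : B}
    (hg : δ g = v) (hh : δ h = cs.simple i) (hd : cs.IsRightDescent v i) :
    δ (g * h) = v * cs.simple i ∨ δ (g * h) = v := by
  obtain ⟨h₁, hh₂, hh₁⟩ := hwg.wg3 g i (hg ▸ hd)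
  rw [hg] at hh₁
  set h₂ := h₁⁻¹ * g with hh₂def
  have hgsplit : g = h₁ * h₂ := by rw [hh₂def]; group
  set p := h₂ * h with hpdef
  have hghp : g * h = h₁ * p := by rw [hpdef, hgsplit]; group
  -- δ p = 1 or δ p = s i
  have hp1 := hwg.wg2 p h⁻¹
  rw [delta_inv_simple hwg hh, (by rw [hpdef]; group : p * h⁻¹ = h₂), hh₂] at hp1
  rcases bruhatLE_simple cs hp1 with hps | hps
  · -- δ p * s i = 1, so δ p = s i
    have hp : δ p = cs.simple i := by
      rw [← cs.simple_mul_simple_cancel_right (w := δ p) i, hps, one_mul]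
    -- δ p = δ h₂ : use double coset bijectivity
    obtain ⟨b, hb, b', hb', hpeq⟩ := hbij.2 h₂ p (by rw [hh₂, hp])
    rw [Cset, Set.mem_setOf_eq] at hb hb'
    right
    have key : δ (h₁ * b * h₂) = v := by
      have hnd := not_descent_mul_simple cs hd
      have := delta_mul_ascent hwg (v := v * cs.simple i) (i := i)
        (delta_mul_right_one hwg hb h₁ |>.trans hh₁) hh₂ hnd
      rwa [cs.simple_mul_simple_cancel_right] at this
    calc δ (g * h) = δ (h₁ * (b * h₂ * b')) := by rw [hghp, hpeq]
      _ = δ (h₁ * b * h₂ * b') := congrArg δ (by group)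
      _ = δ (h₁ * b * h₂) := delta_mul_right_one hwg hb' _
      _ = v := key
  · -- δ p * s i = s i, so δ p = 1
    have hp : δ p = 1 := by
      have := mul_right_cancel (b := cs.simple i) (a := δ p) (c := 1) (by rw [hps, one_mul])
      exact this
    left
    rw [hghp, delta_mul_right_one hwg hp, hh₁]

end WG

/-- Let `δ : G → W` be a `W`-groupoid with one chamber such that `δ_B` is a
bijection. Then axiom (B) holds: for all `w ∈ W` and `s ∈ S`,
(i) if `ws < w` then `C(ws) ⊆ C(w)C(s) ⊆ C(ws) ∪ C(w)`, and
(ii) if `ws > w` then `C(w)C(s) = C(ws)`. -/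
theorem stmt13 (cs : CoxeterSystem M W) (δ : G → W)
    (hwg : IsGroupWGroupoid cs δ) (hbij : DeltaBBijective δ) (w : W) (i : B) :
    (cs.IsRightDescent w i →
      Cset δ (w * cs.simple i) ⊆ Cset δ w * Cset δ (cs.simple i) ∧
      Cset δ w * Cset δ (cs.simple i) ⊆ Cset δ (w * cs.simple i) ∪ Cset δ w) ∧
    (¬ cs.IsRightDescent w i →
      Cset δ w * Cset δ (cs.simple i) = Cset δ (w * cs.simple i)) := by
  constructor
  · intro hd
    constructor
    · -- C(ws) ⊆ C(w) C(s)
      intro g hg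
      rw [Cset, Set.mem_setOf_eq] at hg
      obtain ⟨h, hh⟩ := hwg.weak i
      have hnd := not_descent_mul_simple cs hd
      have hgh : δ (g * h) = w := by
        have := delta_mul_ascent hwg hg hh hnd
        rwa [cs.simple_mul_simple_cancel_right] at this
      refine ⟨g * h, hgh, h⁻¹, delta_inv_simple hwg hh, by group⟩
    · -- C(w) C(s) ⊆ C(ws) ∪ C(w)
      rintro x ⟨g, hg, h, hh, rfl⟩
      rcases delta_mul_descent hwg hbij hg hh hd with h' | h'
      · exact Or.inl h'
      · exact Or.inr h'
  · intro hnd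
    apply Set.Subset.antisymm
    · rintro x ⟨g, hg, h, hh, rfl⟩
      exact delta_mul_ascent hwg hg hh hnd
    · intro g hg
      rw [Cset, Set.mem_setOf_eq] at hg
      have hd : cs.IsRightDescent (δ g) i := by
        rw [hg]
        unfold CoxeterSystem.IsRightDescent
        rw [cs.simple_mul_simple_cancel_right]
        rw [cs.not_isRightDescent_iff] at hnd
        omega
      obtain ⟨h₁, hh₂, hh₁⟩ := hwg.wg3 g i hd
      rw [hg, cs.simple_mul_simple_cancel_right] at hh₁
      exact ⟨h₁, hh₁, h₁⁻¹ * g, hh₂, by group⟩
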